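/- Let Ω ⊂ ℝⁿ be a bounded connected open set whose signed distance function d is C² on a neighborhood of ∂Ω. Assume condition (reg2) (β-Hölder continuity of σ with β ∈ (1/2,1]) and the variant of condition (irrelevant) with exponent γ = 1: there exist δ₁, k > 0 such that for every x̄ ∈ ∂Ω there is ᾱ ∈ A with σ(x̄,ᾱ)ᵀ Dd(x̄) = 0 and b(x,ᾱ)·Dd(x) + tr(a(x,ᾱ)D²d(x)) ≥ k d(x) for all x ∈ Ω ∩ B_{δ₁}(x̄). Then for every η > 0 there exists δ > 0 such that for all x ∈ Ω_δ one has F[−log(d+η)](x) > 0, i.e. sup_{α∈A} ( b(x,α)·Dd(x)/(d(x)+η) + tr(a(x,α)D²d(x))/(d(x)+η) − |σ(x,α)ᵀ Dd(x)|²/(d(x)+η)² ) > 0. -/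

import Mathlib

open scoped InnerProductSpace Matrix
open Filter

noncomputable section

/-- The signed distance to the boundary of `Ω`:
`d(x) = dist(x, Ωᶜ) - dist(x, closure Ω)`. -/
def sdist {n : ℕ} (Ω : Set (EuclideanSpace ℝ (Fin n))) (x : EuclideanSpace ℝ (Fin n)) : ℝ :=
  Metric.infDist x Ωᶜ - Metric.infDist x (closure Ω)

/-- The distance to the topological boundary of `Ω`. -/
def bdist {n : ℕ} (Ω : Set (EuclideanSpace ℝ (Fin n))) (x : EuclideanSpace ℝ (Fin n)) : ℝ :=
  Metric.infDist x (frontier Ω)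

/-- The Frobenius (Euclidean) norm of a matrix. -/
def mnorm {n r : ℕ} (M : Matrix (Fin n) (Fin r) ℝ) : ℝ :=
  Real.sqrt (∑ i, ∑ j, M i j ^ 2)

/-- The quadratic form `v ↦ v ⬝ X v`. -/
def quadForm {n : ℕ} (X : Matrix (Fin n) (Fin n) ℝ) (v : EuclideanSpace ℝ (Fin n)) : ℝ :=
  ∑ i, ∑ j, X i j * v i * v j

/-- `Mᵀ v` as a vector in `ℝʳ` (used for `σ(x,α)ᵀ Dd(x)`). -/
def sigmaT {n r : ℕ} (M : Matrix (Fin n) (Fin r) ℝ) (v : EuclideanSpace ℝ (Fin n)) :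
    Fin r → ℝ :=
  Matrix.mulVec Mᵀ (fun i => v i)

/-- The second-order superjet of `u` at `x` relative to `S`. -/
def J2plus {n : ℕ} (S : Set (EuclideanSpace ℝ (Fin n))) (u : EuclideanSpace ℝ (Fin n) → ℝ)
    (x : EuclideanSpace ℝ (Fin n)) :
    Set (EuclideanSpace ℝ (Fin n) × Matrix (Fin n) (Fin n) ℝ) :=
  { pX | pX.2.IsSymm ∧ ∀ ε > (0 : ℝ), ∀ᶠ y in nhdsWithin x S,
      u y - u x - ⟪pX.1, y - x⟫_ℝ - (1 / 2) * quadForm pX.2 (y - x) ≤ ε * ‖y - x‖ ^ 2 }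

/-- The second-order subjet of `u` at `x` relative to `S`: `J^{2,-}u = -J^{2,+}(-u)`. -/
def J2minus {n : ℕ} (S : Set (EuclideanSpace ℝ (Fin n))) (u : EuclideanSpace ℝ (Fin n) → ℝ)
    (x : EuclideanSpace ℝ (Fin n)) :
    Set (EuclideanSpace ℝ (Fin n) × Matrix (Fin n) (Fin n) ℝ) :=
  { qZ | (-qZ.1, -qZ.2) ∈ J2plus S (fun y => -u y) x }

/-- The first-order superdifferential of `u` at `x` relative to `S`. -/
def D1plus {n : ℕ} (S : Set (EuclideanSpace ℝ (Fin n))) (u : EuclideanSpace ℝ (Fin n) → ℝ)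
    (x : EuclideanSpace ℝ (Fin n)) : Set (EuclideanSpace ℝ (Fin n)) :=
  { q | ∀ ε > (0 : ℝ), ∀ᶠ y in nhdsWithin x S, u y - u x - ⟪q, y - x⟫_ℝ ≤ ε * ‖y - x‖ }

/-- The Bellman operator `F(x,p,X) = sup_{α ∈ A} (-b(x,α)·p - tr(σσᵀ X))`. -/
def Fop {n m r : ℕ} (A : Set (Fin m → ℝ))
    (b : EuclideanSpace ℝ (Fin n) → (Fin m → ℝ) → EuclideanSpace ℝ (Fin n))
    (σ : EuclideanSpace ℝ (Fin n) → (Fin m → ℝ) → Matrix (Fin n) (Fin r) ℝ)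
    (x p : EuclideanSpace ℝ (Fin n)) (X : Matrix (Fin n) (Fin n) ℝ) : ℝ :=
  sSup ((fun α => -⟪b x α, p⟫_ℝ - Matrix.trace (σ x α * (σ x α)ᵀ * X)) '' A)

/-- The Hamiltonian `H(x,p,X) = sup_{α ∈ A} (-b(x,α)·p - tr(σσᵀ X) - l(x,α))`. -/
def Hop {n m r : ℕ} (A : Set (Fin m → ℝ))
    (b : EuclideanSpace ℝ (Fin n) → (Fin m → ℝ) → EuclideanSpace ℝ (Fin n))
    (σ : EuclideanSpace ℝ (Fin n) → (Fin m → ℝ) → Matrix (Fin n) (Fin r) ℝ)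
    (l : EuclideanSpace ℝ (Fin n) → (Fin m → ℝ) → ℝ)
    (x p : EuclideanSpace ℝ (Fin n)) (X : Matrix (Fin n) (Fin n) ℝ) : ℝ :=
  sSup ((fun α => -⟪b x α, p⟫_ℝ - Matrix.trace (σ x α * (σ x α)ᵀ * X) - l x α) '' A)

/-- The set of projections of `x` onto `∂Ω`. -/
def projSet {n : ℕ} (Ω : Set (EuclideanSpace ℝ (Fin n))) (x : EuclideanSpace ℝ (Fin n)) :
    Set (EuclideanSpace ℝ (Fin n)) :=
  { z | z ∈ frontier Ω ∧ dist x z = bdist Ω x }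

/-- The interior normal directions at a boundary point `z`. -/
def normalDirs {n : ℕ} (Ω : Set (EuclideanSpace ℝ (Fin n))) (z : EuclideanSpace ℝ (Fin n)) :
    Set (EuclideanSpace ℝ (Fin n)) :=
  { ν | ‖ν‖ = 1 ∧ ∃ x ∈ Ω, x = z + bdist Ω x • ν }

lemma sq_add_le_aux (a b : ℝ) : (a + b) ^ 2 ≤ 2 * a ^ 2 + 2 * b ^ 2 := by
  nlinarith [sq_nonneg (a - b)]

def e2 {r : ℕ} (u : Fin r → ℝ) : EuclideanSpace ℝ (Fin r) := WithLp.toLp 2 u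

@[simp] lemma e2_apply {r : ℕ} (u : Fin r → ℝ) (i : Fin r) : e2 u i = u i := rfl

lemma euclid_sum_sq {r : ℕ} (u : EuclideanSpace ℝ (Fin r)) : ∑ i, u i ^ 2 = ‖u‖ ^ 2 := by
  rw [EuclideanSpace.norm_eq, Real.sq_sqrt (by positivity)]
  simp [sq_abs]

lemma mnorm_nonneg {n r : ℕ} (M : Matrix (Fin n) (Fin r) ℝ) : 0 ≤ mnorm M := Real.sqrt_nonneg _

lemma mnorm_sq {n r : ℕ} (M : Matrix (Fin n) (Fin r) ℝ) : mnorm M ^ 2 = ∑ i, ∑ j, M i j ^ 2 :=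
  Real.sq_sqrt (by positivity)

lemma mnorm_entry_le {n r : ℕ} (M : Matrix (Fin n) (Fin r) ℝ) (i : Fin n) (j : Fin r) :
    |M i j| ≤ mnorm M := by
  rw [mnorm, ← Real.sqrt_sq_eq_abs]
  apply Real.sqrt_le_sqrt
  calc M i j ^ 2 ≤ ∑ j', M i j' ^ 2 :=
        Finset.single_le_sum (f := fun j' => M i j' ^ 2) (fun _ _ => sq_nonneg _) (Finset.mem_univ j)
    _ ≤ ∑ i', ∑ j', M i' j' ^ 2 :=
        Finset.single_le_sum (f := fun i' => ∑ j', M i' j' ^ 2)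
          (fun _ _ => Finset.sum_nonneg fun _ _ => sq_nonneg _) (Finset.mem_univ i)

lemma sigmaT_norm_le {n r : ℕ} (M : Matrix (Fin n) (Fin r) ℝ) (v : EuclideanSpace ℝ (Fin n)) :
    ‖e2 (sigmaT M v)‖ ≤ mnorm M * ‖v‖ := by
  have hterm : ∀ j : Fin r, e2 (sigmaT M v) j ^ 2
      ≤ (∑ i, M i j ^ 2) * ∑ i, v i ^ 2 := by
    intro j
    have : e2 (sigmaT M v) j = ∑ i, M i j * v i := by
      simp [sigmaT, Matrix.mulVec, dotProduct, Matrix.transpose_apply]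
    rw [this]
    exact Finset.sum_mul_sq_le_sq_mul_sq _ _ _
  have key : ∑ j, e2 (sigmaT M v) j ^ 2 ≤ (mnorm M * ‖v‖) ^ 2 := by
    calc ∑ j, e2 (sigmaT M v) j ^ 2
        ≤ ∑ j : Fin r, (∑ i, M i j ^ 2) * ∑ i, v i ^ 2 := Finset.sum_le_sum fun j _ => hterm j
      _ = (∑ j, ∑ i, M i j ^ 2) * ∑ i, v i ^ 2 := by rw [Finset.sum_mul]
      _ = (mnorm M * ‖v‖) ^ 2 := by
          rw [mul_pow, mnorm_sq, Finset.sum_comm, euclid_sum_sq]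
  rw [euclid_sum_sq] at key
  have h0 : (0:ℝ) ≤ ‖e2 (sigmaT M v)‖ := norm_nonneg _
  exact (pow_le_pow_iff_left₀ h0 (mul_nonneg (mnorm_nonneg M) (norm_nonneg v)) two_ne_zero).mp key

lemma sigmaT_split {n r : ℕ} (M N : Matrix (Fin n) (Fin r) ℝ) (v w : EuclideanSpace ℝ (Fin n)) :
    e2 (sigmaT M v)
      = e2 (sigmaT (M - N) v)
        + e2 (sigmaT N (v - w))
        + e2 (sigmaT N w) := by
  ext j
  show (sigmaT M v) j = (sigmaT (M - N) v) j + (sigmaT N (v - w)) j + (sigmaT N w) j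
  simp only [sigmaT, Matrix.mulVec, dotProduct, Matrix.transpose_apply,
    Matrix.sub_apply, PiLp.sub_apply]
  rw [← Finset.sum_add_distrib, ← Finset.sum_add_distrib]
  exact Finset.sum_congr rfl fun i _ => by ring

lemma sdist_of_mem {n : ℕ} {Ω : Set (EuclideanSpace ℝ (Fin n))} {x : EuclideanSpace ℝ (Fin n)}
    (hx : x ∈ Ω) : sdist Ω x = Metric.infDist x Ωᶜ := by
  rw [sdist, Metric.infDist_zero_of_mem (subset_closure hx), sub_zero]

lemma sdist_pos {n : ℕ} {Ω : Set (EuclideanSpace ℝ (Fin n))} (hΩo : IsOpen Ω)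
    (hne : (Ωᶜ : Set (EuclideanSpace ℝ (Fin n))).Nonempty) {x : EuclideanSpace ℝ (Fin n)}
    (hx : x ∈ Ω) : 0 < sdist Ω x := by
  rw [sdist_of_mem hx]
  exact ((isClosed_compl_iff.2 hΩo).notMem_iff_infDist_pos hne).1 (by simpa using hx)

lemma sdist_frontier {n : ℕ} {Ω : Set (EuclideanSpace ℝ (Fin n))} {z : EuclideanSpace ℝ (Fin n)}
    (hz : z ∈ frontier Ω) : sdist Ω z = 0 := by
  have h1 : Metric.infDist z Ωᶜ = 0 := by
    rw [← Metric.infDist_closure]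
    exact Metric.infDist_zero_of_mem (by rw [← frontier_compl] at hz; exact frontier_subset_closure hz)
  have h2 : Metric.infDist z (closure Ω) = 0 := Metric.infDist_zero_of_mem (frontier_subset_closure hz)
  simp [sdist, h1, h2]

lemma abs_sdist_le {n : ℕ} {Ω : Set (EuclideanSpace ℝ (Fin n))} (hΩo : IsOpen Ω)
    {z y : EuclideanSpace ℝ (Fin n)} (hz : z ∈ frontier Ω) : |sdist Ω y| ≤ dist y z := by
  have hzc : z ∈ Ωᶜ := by
    rw [hΩo.frontier_eq] at hz; exact hz.2
  have h1 : Metric.infDist y Ωᶜ ≤ dist y z := Metric.infDist_le_dist_of_mem hzc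
  have h2 : Metric.infDist y (closure Ω) ≤ dist y z := Metric.infDist_le_dist_of_mem (frontier_subset_closure hz)
  rw [sdist, abs_sub_le_iff]
  constructor
  · linarith [Metric.infDist_nonneg (x := y) (s := closure Ω)]
  · linarith [Metric.infDist_nonneg (x := y) (s := (Ωᶜ : Set (EuclideanSpace ℝ (Fin n))))]

lemma exists_proj_frontier {n : ℕ} {Ω : Set (EuclideanSpace ℝ (Fin n))} (hΩo : IsOpen Ω)
    (hne : (Ωᶜ : Set (EuclideanSpace ℝ (Fin n))).Nonempty) {x : EuclideanSpace ℝ (Fin n)}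
    (hx : x ∈ Ω) : ∃ z ∈ frontier Ω, dist x z = Metric.infDist x Ωᶜ := by
  obtain ⟨z, hzc, hdz⟩ := (isClosed_compl_iff.2 hΩo).exists_infDist_eq_dist hne x
  refine ⟨z, ?_, hdz.symm⟩
  have hpos : 0 < dist x z := by
    rw [← hdz]; exact ((isClosed_compl_iff.2 hΩo).notMem_iff_infDist_pos hne).1 (by simpa using hx)
  have hball : Metric.ball x (dist x z) ⊆ Ω := by
    intro y hy
    by_contra hyn
    have : Metric.infDist x Ωᶜ ≤ dist x y := Metric.infDist_le_dist_of_mem hyn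
    rw [Metric.mem_ball, dist_comm, ← hdz] at hy
    exact absurd (lt_of_le_of_lt this hy) (lt_irrefl _)
  have hzclos : z ∈ closure Ω := by
    have : z ∈ closure (Metric.ball x (dist x z)) := by
      rw [closure_ball x (ne_of_gt hpos)]
      exact Metric.mem_closedBall.2 (by rw [dist_comm])
    exact closure_mono hball this
  rw [frontier, hΩo.interior_eq]
  exact ⟨hzclos, hzc⟩

lemma trace_abs_le {n r : ℕ} (σM : Matrix (Fin n) (Fin r) ℝ) (X : Matrix (Fin n) (Fin n) ℝ)
    {C : ℝ} (hC : mnorm σM ≤ C) (hC0 : 0 ≤ C) :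
    |Matrix.trace (σM * σMᵀ * X)| ≤ (r : ℝ) * C ^ 2 * ∑ i, ∑ j, |X j i| := by
  have hentry : ∀ i j, |σM i j| ≤ C := fun i j => (mnorm_entry_le σM i j).trans hC
  have hij : ∀ i j, |(σM * σMᵀ) i j| ≤ (r : ℝ) * C ^ 2 := by
    intro i j
    rw [Matrix.mul_apply]
    calc |∑ k, σM i k * σMᵀ k j| ≤ ∑ k, |σM i k * σMᵀ k j| := Finset.abs_sum_le_sum_abs _ _
      _ ≤ ∑ _k : Fin r, C ^ 2 := Finset.sum_le_sum fun k _ => by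
          rw [abs_mul, Matrix.transpose_apply, sq]
          exact mul_le_mul (hentry i k) (hentry j k) (abs_nonneg _) hC0
      _ = (r : ℝ) * C ^ 2 := by simp [Finset.sum_const, Finset.card_univ, nsmul_eq_mul]
  rw [Matrix.trace]
  calc |∑ i, Matrix.diag (σM * σMᵀ * X) i| ≤ ∑ i, |Matrix.diag (σM * σMᵀ * X) i| :=
        Finset.abs_sum_le_sum_abs _ _
    _ ≤ ∑ i, ∑ j, (r : ℝ) * C ^ 2 * |X j i| := by
        refine Finset.sum_le_sum fun i _ => ?_
        rw [Matrix.diag_apply, Matrix.mul_apply]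
        calc |∑ j, (σM * σMᵀ) i j * X j i| ≤ ∑ j, |(σM * σMᵀ) i j * X j i| :=
              Finset.abs_sum_le_sum_abs _ _
          _ ≤ ∑ j, (r : ℝ) * C ^ 2 * |X j i| := Finset.sum_le_sum fun j _ => by
              rw [abs_mul]
              exact mul_le_mul_of_nonneg_right (hij i j) (abs_nonneg _)
    _ = (r : ℝ) * C ^ 2 * ∑ i, ∑ j, |X j i| := by
        rw [Finset.mul_sum]
        exact Finset.sum_congr rfl fun i _ => by rw [Finset.mul_sum]


theorem statement_4
    {n m r : ℕ} (Ω : Set (EuclideanSpace ℝ (Fin n)))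
    (hΩo : IsOpen Ω) (hΩconn : IsConnected Ω) (hΩbdd : Bornology.IsBounded Ω)
    (A : Set (Fin m → ℝ)) (hA : IsClosed A) (hAne : A.Nonempty)
    (b : EuclideanSpace ℝ (Fin n) → (Fin m → ℝ) → EuclideanSpace ℝ (Fin n))
    (σ : EuclideanSpace ℝ (Fin n) → (Fin m → ℝ) → Matrix (Fin n) (Fin r) ℝ)
    (hbBdd : ∃ C, ∀ x ∈ closure Ω, ∀ α ∈ A, ‖b x α‖ ≤ C)
    (hσBdd : ∃ C, ∀ x ∈ closure Ω, ∀ α ∈ A, mnorm (σ x α) ≤ C)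
    (hbCont : ContinuousOn (fun q : EuclideanSpace ℝ (Fin n) × (Fin m → ℝ) => b q.1 q.2)
      (closure Ω ×ˢ A))
    (hσCont : ContinuousOn (fun q : EuclideanSpace ℝ (Fin n) × (Fin m → ℝ) => σ q.1 q.2)
      (closure Ω ×ˢ A))
    (δ₀ : ℝ) (hδ₀ : 0 < δ₀)
    (Dd : EuclideanSpace ℝ (Fin n) → EuclideanSpace ℝ (Fin n))
    (D2d : EuclideanSpace ℝ (Fin n) → Matrix (Fin n) (Fin n) ℝ)
    (hDd : ∀ x, |sdist Ω x| < δ₀ → HasGradientAt (sdist Ω) (Dd x) x)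
    (hDdnorm : ∀ x, |sdist Ω x| < δ₀ → ‖Dd x‖ = 1)
    (hD2d : ∀ x, |sdist Ω x| < δ₀ →
      HasFDerivAt Dd (LinearMap.toContinuousLinearMap (Matrix.toEuclideanLin (D2d x))) x)
    (hD2dCont : ContinuousOn D2d {x | |sdist Ω x| < δ₀})
    (β B : ℝ) (hβlow : 1 / 2 < β) (hβhigh : β ≤ 1) (hB : 0 < B)
    (hreg2 : ∀ x ∈ closure Ω, ∀ y ∈ closure Ω, ∀ α ∈ A,
      mnorm (σ x α - σ y α) ≤ B * ‖x - y‖ ^ β)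
    (hirr1 : ∃ δ₁ > (0 : ℝ), ∃ k > (0 : ℝ), ∀ z ∈ frontier Ω, ∃ α₀ ∈ A,
      sigmaT (σ z α₀) (Dd z) = 0 ∧
        ∀ x ∈ Ω ∩ Metric.ball z δ₁,
          k * sdist Ω x ≤
            ⟪b x α₀, Dd x⟫_ℝ + Matrix.trace (σ x α₀ * (σ x α₀)ᵀ * D2d x)) :
    ∀ η > (0 : ℝ), ∃ δ > (0 : ℝ), ∀ x ∈ Ω, sdist Ω x < δ →
      0 < sSup ((fun α =>
        ⟪b x α, Dd x⟫_ℝ / (sdist Ω x + η)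
          + Matrix.trace (σ x α * (σ x α)ᵀ * D2d x) / (sdist Ω x + η)
          - (∑ i, sigmaT (σ x α) (Dd x) i ^ 2) / (sdist Ω x + η) ^ 2) '' A) := by
  classical
  intro η hη
  obtain ⟨x₀, hx₀⟩ := hΩconn.nonempty
  obtain ⟨α₁, hα₁⟩ := hAne
  have hcompl : (Ωᶜ : Set (EuclideanSpace ℝ (Fin n))).Nonempty := by
    rw [Set.nonempty_compl]
    intro hc
    have hsd : sdist Ω x₀ = 0 := by
      unfold sdist
      rw [hc]
      simp [Metric.infDist_zero_of_mem (Set.mem_univ x₀)]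
    have h1 : ‖Dd x₀‖ = 1 := hDdnorm x₀ (by rw [hsd]; simpa using hδ₀)
    obtain ⟨R, hR⟩ := isBounded_iff_forall_norm_le.1 hΩbdd
    have h2 := hR ((|R| + 1) • Dd x₀) (by rw [hc]; trivial)
    rw [norm_smul, h1, mul_one, Real.norm_eq_abs, abs_of_nonneg (by positivity)] at h2
    linarith [le_abs_self R]
  have hFb : Bornology.IsBounded (frontier Ω) := hΩbdd.closure.subset frontier_subset_closure
  have hFc : IsCompact (frontier Ω) := Metric.isCompact_of_isClosed_isBounded isClosed_frontier hFb
  have hFne : (frontier Ω).Nonempty := by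
    obtain ⟨z, hz, -⟩ := exists_proj_frontier hΩo hcompl hx₀
    exact ⟨z, hz⟩
  set K := {y : EuclideanSpace ℝ (Fin n) | Metric.infDist y (frontier Ω) ≤ δ₀ / 2} with hKdef
  have hKF : ∀ y ∈ K, |sdist Ω y| < δ₀ := by
    intro y hy
    obtain ⟨w, hwF, hwd⟩ := hFc.exists_infDist_eq_dist hFne y
    have h1 := abs_sdist_le hΩo hwF (y := y)
    rw [← hwd] at h1
    have h2 : Metric.infDist y (frontier Ω) ≤ δ₀ / 2 := hy
    linarith
  have hKcl : IsClosed K := isClosed_le (Metric.continuous_infDist_pt (frontier Ω)) continuous_const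
  have hKbdd : Bornology.IsBounded K := by
    obtain ⟨Rf, hRf⟩ := isBounded_iff_forall_norm_le.1 hFb
    refine isBounded_iff_forall_norm_le.2 ⟨Rf + δ₀ / 2, fun y hy => ?_⟩
    obtain ⟨w, hwF, hwd⟩ := hFc.exists_infDist_eq_dist hFne y
    have h1 : ‖y‖ - ‖w‖ ≤ ‖y - w‖ := norm_sub_norm_le y w
    have h2 : dist y w ≤ δ₀ / 2 := by rw [← hwd]; exact hy
    rw [dist_eq_norm] at h2
    have := hRf w hwF
    linarith
  have hKcomp : IsCompact K := Metric.isCompact_of_isClosed_isBounded hKcl hKbdd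
  have hKne : K.Nonempty := by
    obtain ⟨w, hw⟩ := hFne
    exact ⟨w, by simp [hKdef, Metric.infDist_zero_of_mem hw, le_of_lt (half_pos hδ₀)]⟩
  have hψ : Continuous fun M : Matrix (Fin n) (Fin n) ℝ =>
      (LinearMap.toContinuousLinearMap (Matrix.toEuclideanLin M) :
        EuclideanSpace ℝ (Fin n) →L[ℝ] EuclideanSpace ℝ (Fin n)) := by
    have hlin : IsLinearMap ℝ fun M : Matrix (Fin n) (Fin n) ℝ =>
        (LinearMap.toContinuousLinearMap (Matrix.toEuclideanLin M) :
          EuclideanSpace ℝ (Fin n) →L[ℝ] EuclideanSpace ℝ (Fin n)) := by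
      constructor <;> intros <;> simp [map_add, map_smul]
    exact (IsLinearMap.mk' _ hlin).continuous_of_finiteDimensional
  have hgc : ContinuousOn
      (fun y => ‖(LinearMap.toContinuousLinearMap (Matrix.toEuclideanLin (D2d y)) :
        EuclideanSpace ℝ (Fin n) →L[ℝ] EuclideanSpace ℝ (Fin n))‖) K :=
    (continuous_norm.comp hψ).comp_continuousOn (hD2dCont.mono fun y hy => hKF y hy)
  obtain ⟨y₀, hy₀K, hy₀max⟩ := hKcomp.exists_isMaxOn hKne hgc
  set L := ‖(LinearMap.toContinuousLinearMap (Matrix.toEuclideanLin (D2d y₀)) :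
    EuclideanSpace ℝ (Fin n) →L[ℝ] EuclideanSpace ℝ (Fin n))‖ with hLdef
  have hL0 : 0 ≤ L := norm_nonneg _
  have hLb : ∀ y ∈ K, ‖(LinearMap.toContinuousLinearMap (Matrix.toEuclideanLin (D2d y)) :
      EuclideanSpace ℝ (Fin n) →L[ℝ] EuclideanSpace ℝ (Fin n))‖ ≤ L := fun y hy => hy₀max hy
  obtain ⟨δ₁, hδ₁pos, k, hk, hirr⟩ := hirr1
  obtain ⟨Cb, hCb⟩ := hbBdd
  obtain ⟨Cσ, hCσ⟩ := hσBdd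
  have hCσ0 : 0 ≤ Cσ := le_trans (mnorm_nonneg _) (hCσ x₀ (subset_closure hx₀) α₁ hα₁)
  have hβ1 : (0 : ℝ) < 2 * β - 1 := by linarith
  have hgont : ContinuousAt (fun t : ℝ => 2 * B ^ 2 * t ^ (2 * β - 1) + 2 * Cσ ^ 2 * L ^ 2 * t)
      0 := by
    have h1 : ContinuousAt (fun t : ℝ => t ^ (2 * β - 1)) 0 :=
      Real.continuousAt_rpow_const 0 _ (Or.inr hβ1.le)
    exact (continuousAt_const.mul h1).add (continuousAt_const.mul continuousAt_id)
  have hev : ∀ᶠ t in nhds (0 : ℝ),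
      2 * B ^ 2 * t ^ (2 * β - 1) + 2 * Cσ ^ 2 * L ^ 2 * t < k * η := by
    have h2 := hgont.tendsto
    have hg0 : (2 * B ^ 2 * (0 : ℝ) ^ (2 * β - 1) + 2 * Cσ ^ 2 * L ^ 2 * 0) = 0 := by
      rw [Real.zero_rpow (ne_of_gt hβ1)]; ring
    rw [hg0] at h2
    exact h2.eventually (eventually_lt_nhds (by positivity))
  obtain ⟨ε₂, hε₂, hε₂p⟩ := Metric.eventually_nhds_iff.1 hev
  refine ⟨min (min (δ₀ / 2) δ₁) ε₂, lt_min (lt_min (half_pos hδ₀) hδ₁pos) hε₂, ?_⟩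
  intro x hxΩ hxd
  have hd0 : 0 < sdist Ω x := sdist_pos hΩo hcompl hxΩ
  set d := sdist Ω x with hd
  have hdδ0 : d < δ₀ / 2 := lt_of_lt_of_le hxd ((min_le_left _ _).trans (min_le_left _ _))
  have hdδ1 : d < δ₁ := lt_of_lt_of_le hxd ((min_le_left _ _).trans (min_le_right _ _))
  have hdε2 : d < ε₂ := lt_of_lt_of_le hxd (min_le_right _ _)
  obtain ⟨z, hzF, hzd⟩ := exists_proj_frontier hΩo hcompl hxΩ
  have hzdist : dist x z = d := by rw [hzd, hd, sdist_of_mem hxΩ]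
  have hsegK : segment ℝ z x ⊆ K := by
    intro y hy
    have hcb := (convex_closedBall z (dist x z)).segment_subset
      (Metric.mem_closedBall_self (dist_nonneg)) (Metric.mem_closedBall.2 le_rfl) hy
    have h1 : Metric.infDist y (frontier Ω) ≤ dist y z := Metric.infDist_le_dist_of_mem hzF
    have h2 : dist y z ≤ dist x z := Metric.mem_closedBall.1 hcb
    rw [hzdist] at h2
    show Metric.infDist y (frontier Ω) ≤ δ₀ / 2
    linarith
  have hxK : x ∈ K := hsegK (right_mem_segment ℝ z x)
  have hLip : ‖Dd x - Dd z‖ ≤ L * ‖x - z‖ :=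
    (convex_segment z x).norm_image_sub_le_of_norm_hasFDerivWithin_le
      (fun y hy => (hD2d y (hKF y (hsegK hy))).hasFDerivWithinAt)
      (fun y hy => hLb y (hsegK hy))
      (left_mem_segment ℝ z x) (right_mem_segment ℝ z x)
  have hxcl : x ∈ closure Ω := subset_closure hxΩ
  have hzcl : z ∈ closure Ω := frontier_subset_closure hzF
  have hDdx : ‖Dd x‖ = 1 := hDdnorm x (hKF x hxK)
  obtain ⟨α₀, hα₀A, hσ0, hlow⟩ := hirr z hzF
  have hPT : k * d ≤ ⟪b x α₀, Dd x⟫_ℝ + Matrix.trace (σ x α₀ * (σ x α₀)ᵀ * D2d x) :=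
    hlow x ⟨hxΩ, by rw [Metric.mem_ball]; rw [hzdist]; exact hdδ1⟩
  have hxz : ‖x - z‖ = d := by rw [← dist_eq_norm, hzdist]
  have hu : ‖e2 (sigmaT (σ x α₀) (Dd x))‖ ≤ B * d ^ β + Cσ * (L * d) := by
    rw [sigmaT_split (σ x α₀) (σ z α₀) (Dd x) (Dd z)]
    have h3 : e2 (sigmaT (σ z α₀) (Dd z)) = 0 := by rw [hσ0]; rfl
    rw [h3, add_zero]
    calc ‖e2 (sigmaT (σ x α₀ - σ z α₀) (Dd x)) + e2 (sigmaT (σ z α₀) (Dd x - Dd z))‖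
        ≤ ‖e2 (sigmaT (σ x α₀ - σ z α₀) (Dd x))‖ + ‖e2 (sigmaT (σ z α₀) (Dd x - Dd z))‖ :=
          norm_add_le _ _
      _ ≤ mnorm (σ x α₀ - σ z α₀) * ‖Dd x‖ + mnorm (σ z α₀) * ‖Dd x - Dd z‖ :=
          add_le_add (sigmaT_norm_le _ _) (sigmaT_norm_le _ _)
      _ ≤ (B * ‖x - z‖ ^ β) * 1 + Cσ * (L * ‖x - z‖) := by
          rw [hDdx]
          refine add_le_add (mul_le_mul_of_nonneg_right
            (hreg2 x hxcl z hzcl α₀ hα₀A) zero_le_one) ?_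
          exact mul_le_mul (hCσ z hzcl α₀ hα₀A) hLip (norm_nonneg _) hCσ0
      _ = B * d ^ β + Cσ * (L * d) := by rw [hxz, mul_one]
  have hMv0 : 0 ≤ B * d ^ β + Cσ * (L * d) := by
    have := Real.rpow_nonneg hd0.le β
    positivity
  have hS : (∑ i, sigmaT (σ x α₀) (Dd x) i ^ 2) ≤ (B * d ^ β + Cσ * (L * d)) ^ 2 := by
    have heq : (∑ i, sigmaT (σ x α₀) (Dd x) i ^ 2) = ‖e2 (sigmaT (σ x α₀) (Dd x))‖ ^ 2 := by
      rw [← euclid_sum_sq]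
      exact Finset.sum_congr rfl fun i _ => by rw [e2_apply]
    rw [heq]
    exact pow_le_pow_left₀ (norm_nonneg _) hu 2
  have hgd : 2 * B ^ 2 * d ^ (2 * β - 1) + 2 * Cσ ^ 2 * L ^ 2 * d < k * η := by
    refine hε₂p ?_
    rw [Real.dist_eq, sub_zero, abs_of_pos hd0]
    exact hdε2
  have hrpow : (d ^ β) ^ 2 = d ^ (2 * β - 1) * d := by
    rw [← Real.rpow_natCast (d ^ β) 2, ← Real.rpow_mul hd0.le]
    rw [show β * ((2 : ℕ) : ℝ) = (2 * β - 1) + 1 by push_cast; ring]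
    rw [Real.rpow_add hd0, Real.rpow_one]
  have hM2 : (B * d ^ β + Cσ * (L * d)) ^ 2 < k * d * (d + η) := by
    calc (B * d ^ β + Cσ * (L * d)) ^ 2
        ≤ 2 * (B * d ^ β) ^ 2 + 2 * (Cσ * (L * d)) ^ 2 := sq_add_le_aux _ _
      _ = d * (2 * B ^ 2 * d ^ (2 * β - 1) + 2 * Cσ ^ 2 * L ^ 2 * d) := by
          rw [mul_pow, hrpow]; ring
      _ < d * (k * η) := mul_lt_mul_of_pos_left hgd hd0
      _ = k * d * η := by ring
      _ ≤ k * d * (d + η) := by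
          have h9 : 0 ≤ k * d * d := by positivity
          linarith only [h9]
  have hden0 : (0 : ℝ) < d + η := by linarith
  have hval : 0 < ⟪b x α₀, Dd x⟫_ℝ / (d + η)
      + Matrix.trace (σ x α₀ * (σ x α₀)ᵀ * D2d x) / (d + η)
      - (∑ i, sigmaT (σ x α₀) (Dd x) i ^ 2) / (d + η) ^ 2 := by
    rw [← add_div]
    have h1 : k * d / (d + η) ≤ (⟪b x α₀, Dd x⟫_ℝ
        + Matrix.trace (σ x α₀ * (σ x α₀)ᵀ * D2d x)) / (d + η) :=
      by gcongr
    have h2 : (∑ i, sigmaT (σ x α₀) (Dd x) i ^ 2) / (d + η) ^ 2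
        ≤ (B * d ^ β + Cσ * (L * d)) ^ 2 / (d + η) ^ 2 := by gcongr
    have h3 : (B * d ^ β + Cσ * (L * d)) ^ 2 / (d + η) ^ 2 < k * d / (d + η) := by
      rw [div_lt_div_iff₀ (by positivity) hden0]
      calc (B * d ^ β + Cσ * (L * d)) ^ 2 * (d + η)
          < k * d * (d + η) * (d + η) := mul_lt_mul_of_pos_right hM2 hden0
        _ = k * d * (d + η) ^ 2 := by ring
    linarith only [h1, h2, h3]
  refine lt_csSup_of_lt ?_ (Set.mem_image_of_mem _ hα₀A) hval
  refine ⟨(Cb * 1 + (r : ℝ) * Cσ ^ 2 * ∑ i, ∑ j, |D2d x j i|) / (d + η), ?_⟩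
  rintro v ⟨α, hαA, rfl⟩
  have hP : |⟪b x α, Dd x⟫_ℝ| ≤ Cb * 1 := by
    calc |⟪b x α, Dd x⟫_ℝ| ≤ ‖b x α‖ * ‖Dd x‖ := abs_real_inner_le_norm _ _
      _ ≤ Cb * 1 := by
          rw [hDdx]
          exact mul_le_mul_of_nonneg_right (hCb x hxcl α hαA) zero_le_one
  have hT : |Matrix.trace (σ x α * (σ x α)ᵀ * D2d x)|
      ≤ (r : ℝ) * Cσ ^ 2 * ∑ i, ∑ j, |D2d x j i| :=
    trace_abs_le _ _ (hCσ x hxcl α hαA) hCσ0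
  have hSnn : 0 ≤ (∑ i, sigmaT (σ x α) (Dd x) i ^ 2) / (d + η) ^ 2 := by positivity
  show ⟪b x α, Dd x⟫_ℝ / (d + η) + Matrix.trace (σ x α * (σ x α)ᵀ * D2d x) / (d + η)
      - (∑ i, sigmaT (σ x α) (Dd x) i ^ 2) / (d + η) ^ 2 ≤ _
  rw [← add_div]
  have h4 : (⟪b x α, Dd x⟫_ℝ + Matrix.trace (σ x α * (σ x α)ᵀ * D2d x)) / (d + η)
      ≤ (Cb * 1 + (r : ℝ) * Cσ ^ 2 * ∑ i, ∑ j, |D2d x j i|) / (d + η) := by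
    have h7 := (abs_le.1 hP).2
    have h8 := (abs_le.1 hT).2
    gcongr
  linarith only [h4, hSnn]
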